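/- Over GF(2), X^16 + X^3 + 1 = (X^3 + X^2 + 1)·D(X), where D(X) = X^13 + X^12 + X^11 + X^9 + X^6 + X^5 + X^4 + X^2 + 1 is a primitive polynomial of degree 13. Consequently, the trinomial X^16 + X^3 + 1 is almost primitive with exponent 13 and increment 3. -/

import Mathlib

open Polynomial

/-- A polynomial `P` over GF(2) has period `ρ`: `ρ` is the least positive
integer such that `P` divides `X^ρ - 1`. -/
def HasPeriod (P : Polynomial (ZMod 2)) (ρ : ℕ) : Prop :=
  0 < ρ ∧ P ∣ X ^ ρ - 1 ∧ ∀ m : ℕ, 0 < m → P ∣ X ^ m - 1 → ρ ≤ m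

/-- A polynomial `P` of degree `n > 0` over GF(2) is primitive if it is
irreducible and has period `2^n - 1`. -/
def IsPrimitivePoly (P : Polynomial (ZMod 2)) : Prop :=
  0 < P.natDegree ∧ Irreducible P ∧ HasPeriod P (2 ^ P.natDegree - 1)

namespace AP

noncomputable def toPoly : List Bool → Polynomial (ZMod 2)
  | [] => 0
  | a :: as => (if a then 1 else 0) + X * toPoly as

@[simp] lemma toPoly_nil : toPoly [] = 0 := rfl
@[simp] lemma toPoly_cons (a : Bool) (as : List Bool) :
    toPoly (a :: as) = (if a then 1 else 0) + X * toPoly as := rfl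

def xorL : List Bool → List Bool → List Bool
  | [], m => m
  | l, [] => l
  | a :: as, b :: bs => (xor a b) :: xorL as bs

def mulL : List Bool → List Bool → List Bool
  | [], _ => []
  | a :: as, b => xorL (if a then b else []) (false :: mulL as b)

def strip : List Bool → List Bool
  | [] => []
  | a :: as =>
    match strip as with
    | [] => if a then [true] else []
    | bs => a :: bs

lemma toPoly_xorL : ∀ l m : List Bool, toPoly (xorL l m) = toPoly l + toPoly m := by
  intro l
  induction l with
  | nil => intro m; simp [xorL]
  | cons a as ih =>
    intro m
    cases m with
    | nil => simp [xorL]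
    | cons b bs =>
      show toPoly ((xor a b) :: xorL as bs) = _
      rw [toPoly_cons, toPoly_cons, toPoly_cons, ih]
      have h2 : (2 : Polynomial (ZMod 2)) = 0 := CharTwo.two_eq_zero
      cases a <;> cases b <;> simp <;> ring_nf <;> rw [h2] <;> ring

lemma toPoly_mulL : ∀ l m : List Bool, toPoly (mulL l m) = toPoly l * toPoly m := by
  intro l
  induction l with
  | nil => intro m; simp [mulL]
  | cons a as ih =>
    intro m
    show toPoly (xorL (if a then m else []) (false :: mulL as m)) = _
    rw [toPoly_xorL, toPoly_cons, toPoly_cons, ih]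
    cases a <;> simp <;> ring

lemma toPoly_strip : ∀ l : List Bool, toPoly (strip l) = toPoly l := by
  intro l
  induction l with
  | nil => rfl
  | cons a as ih =>
    show toPoly (match strip as with
      | [] => if a then [true] else []
      | bs => a :: bs) = _
    rcases h : strip as with _ | ⟨b, bs⟩
    · have has : toPoly as = 0 := by rw [← ih, h, toPoly_nil]
      cases a <;> simp [has]
    · show toPoly (a :: b :: bs) = toPoly (a :: as)
      rw [toPoly_cons, toPoly_cons, toPoly_cons, ← ih, h, toPoly_cons]

def Dl : List Bool := [true, false, true, false, true, true, true, false, false, true, false, true, true, true]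
def Tl : List Bool := [true, false, false, true, false, false, false, false, false, false, false, false, false, false, false, false, true]
def Fl : List Bool := [true, false, true, true]
def r0 : List Bool := [false, true]
def r1 : List Bool := [false, false, true]
def r2 : List Bool := [false, false, false, false, true]
def r3 : List Bool := [false, false, false, false, false, false, false, false, true]
def r4 : List Bool := [true, false, false, true]
def r5 : List Bool := [true, false, false, false, false, false, true]
def r6 : List Bool := [true, false, false, false, false, false, false, false, false, false, false, false, true]
def r7 : List Bool := [true, false, false, false, false, false, false, false, true, false, false, true]
def r8 : List Bool := [false, false, false, true, false, false, true, false, false, true]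
def r9 : List Bool := [false, false, true, false, false, true, true, false, false, false, false, false, true]
def r10 : List Bool := [false, false, false, false, true, false, false, false, true, false, true, true, true]
def r11 : List Bool := [true, false, false, true, true, false, true, true, false, true, false, true]
def r12 : List Bool := [false, true, false, true, true, true, false, true, true, false, true, true, true]
def q0 : List Bool := []
def q1 : List Bool := []
def q2 : List Bool := []
def q3 : List Bool := [true, false, true, true]
def q4 : List Bool := []
def q5 : List Bool := []
def q6 : List Bool := [false, false, false, false, false, false, false, false, true, false, true, true]
def q7 : List Bool := [true, false, true, true, false, false, true, false, true, true]
def q8 : List Bool := [false, false, true, false, true, true]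
def q9 : List Bool := [false, false, false, false, false, false, false, false, true, false, true, true]
def q10 : List Bool := [true, false, true, true, true, false, false, true, false, true, true, true]
def q11 : List Bool := [true, true, true, false, true, true, true, false, true, true]
def q12 : List Bool := [false, true, true, true, true, false, false, true, false, true, true, true]

/-- The candidate primitive polynomial. -/
noncomputable def Dp : Polynomial (ZMod 2) :=
  X ^ 13 + X ^ 12 + X ^ 11 + X ^ 9 + X ^ 6 + X ^ 5 + X ^ 4 + X ^ 2 + 1

lemma toPoly_Dl : toPoly Dl = Dp := by
  simp only [Dl, Dp, toPoly_cons, toPoly_nil, Bool.false_eq_true, if_true, if_false]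
  ring

lemma toPoly_Tl : toPoly Tl = X ^ 16 + X ^ 3 + 1 := by
  simp only [Tl, toPoly_cons, toPoly_nil, Bool.false_eq_true, if_true, if_false]
  ring

lemma toPoly_Fl : toPoly Fl = X ^ 3 + X ^ 2 + 1 := by
  simp only [Fl, toPoly_cons, toPoly_nil, Bool.false_eq_true, if_true, if_false]
  ring

lemma toPoly_r0 : toPoly r0 = X := by
  simp only [r0, toPoly_cons, toPoly_nil, Bool.false_eq_true, if_true, if_false]
  ring

/-- The factorization of the trinomial. -/
lemma factorization :
    (X ^ 16 + X ^ 3 + 1 : Polynomial (ZMod 2)) = (X ^ 3 + X ^ 2 + 1) * Dp := by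
  rw [← toPoly_Tl, ← toPoly_Fl, ← toPoly_Dl, ← toPoly_mulL]
  have : mulL Fl Dl = Tl := by decide
  rw [this]

/-- Squaring step. -/
lemma step (n : ℕ) (r q r' : List Bool) (h : strip (xorL (mulL r r) (mulL Dl q)) = r')
    (hd : Dp ∣ X ^ n - toPoly r) : Dp ∣ X ^ (2 * n) - toPoly r' := by
  have h2 : toPoly r' = toPoly r * toPoly r + Dp * toPoly q := by
    rw [← h, toPoly_strip, toPoly_xorL, toPoly_mulL, toPoly_mulL, toPoly_Dl]
  have key : X ^ (2 * n) - toPoly r' =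
      (X ^ n - toPoly r) * (X ^ n + toPoly r) - Dp * toPoly q := by
    rw [h2, two_mul, pow_add]; ring
  rw [key]
  exact dvd_sub (hd.mul_right _) (Dvd.intro _ rfl)

set_option maxRecDepth 100000 in
lemma Dp_dvd_big : Dp ∣ (X : Polynomial (ZMod 2)) ^ 8192 - X := by
  have h0 : Dp ∣ X ^ 1 - toPoly r0 := by
    rw [toPoly_r0, pow_one, sub_self]; exact dvd_zero _
  have h1 := step 1 r0 q0 r1 (by decide) h0
  have h2 := step 2 r1 q1 r2 (by decide) h1
  have h3 := step 4 r2 q2 r3 (by decide) h2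
  have h4 := step 8 r3 q3 r4 (by decide) h3
  have h5 := step 16 r4 q4 r5 (by decide) h4
  have h6 := step 32 r5 q5 r6 (by decide) h5
  have h7 := step 64 r6 q6 r7 (by decide) h6
  have h8 := step 128 r7 q7 r8 (by decide) h7
  have h9 := step 256 r8 q8 r9 (by decide) h8
  have h10 := step 512 r9 q9 r10 (by decide) h9
  have h11 := step 1024 r10 q10 r11 (by decide) h10
  have h12 := step 2048 r11 q11 r12 (by decide) h11
  have h13 := step 4096 r12 q12 r0 (by decide) h12
  rw [toPoly_r0] at h13
  norm_num at h13
  exact h13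

lemma Dp_coprime_X : IsCoprime (X : Polynomial (ZMod 2)) Dp := by
  refine ⟨-(X ^ 12 + X ^ 11 + X ^ 10 + X ^ 8 + X ^ 5 + X ^ 4 + X ^ 3 + X), 1, ?_⟩
  rw [Dp]; ring

set_option maxRecDepth 100000 in
lemma Dp_dvd : Dp ∣ (X : Polynomial (ZMod 2)) ^ 8191 - 1 := by
  have h := Dp_dvd_big
  have e : (X : Polynomial (ZMod 2)) ^ 8192 - X = (X ^ 8191 - 1) * X := by ring
  rw [e] at h
  exact (Dp_coprime_X.symm).dvd_of_dvd_mul_right h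

lemma Dp_natDegree : Dp.natDegree = 13 := by
  rw [Dp]; compute_degree!

lemma Dp_monic : Dp.Monic := by
  rw [Dp]; monicity!

lemma Dp_ne_zero : Dp ≠ 0 := Dp_monic.ne_zero

lemma Dp_eval_one : Dp.eval 1 = 1 := by
  rw [Dp]; simp; decide

lemma Dp_eval_zero : Dp.eval 0 = 1 := by
  rw [Dp]; simp

lemma Dp_irreducible : Irreducible Dp := by
  obtain ⟨q, hqm, hqi, hqd⟩ :=
    Dp.exists_monic_irreducible_factor (by
      apply Polynomial.not_isUnit_of_natDegree_pos
      rw [Dp_natDegree]; norm_num)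
  haveI : Fact (Irreducible q) := ⟨hqi⟩
  have hq0 : q ≠ 0 := hqi.ne_zero
  haveI : Module.Finite (ZMod 2) (AdjoinRoot q) := (AdjoinRoot.powerBasis hq0).finite
  haveI : Finite (AdjoinRoot q) := Module.finite_of_finite (ZMod 2)
  haveI : Fintype (AdjoinRoot q) := Fintype.ofFinite _
  have hq_dvd_big : q ∣ (X : Polynomial (ZMod 2)) ^ 8191 - 1 := hqd.trans Dp_dvd
  have hα_pow : (AdjoinRoot.root q) ^ 8191 = 1 := by
    have := AdjoinRoot.mk_eq_zero.2 hq_dvd_big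
    rw [map_sub, map_pow, map_one, AdjoinRoot.mk_X] at this
    linear_combination this
  have hα_ne_one : AdjoinRoot.root q ≠ 1 := by
    intro h
    have hz : AdjoinRoot.mk q (X - C 1) = 0 := by
      rw [map_sub, AdjoinRoot.mk_X, AdjoinRoot.mk_C, h]
      simp
    have hdvd : q ∣ X - C 1 := AdjoinRoot.mk_eq_zero.1 hz
    have hassoc := hqi.associated_of_dvd (Polynomial.irreducible_X_sub_C (1 : ZMod 2)) hdvd
    have hXd : (X - C 1 : Polynomial (ZMod 2)) ∣ Dp := hassoc.symm.dvd.trans hqd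
    have := (Polynomial.dvd_iff_isRoot).1 hXd
    rw [Polynomial.IsRoot, Dp_eval_one] at this
    exact one_ne_zero this
  have hα_ne_zero : AdjoinRoot.root q ≠ 0 := by
    intro h
    have hz : AdjoinRoot.mk q X = 0 := by rw [AdjoinRoot.mk_X, h]
    have hdvd : q ∣ X := AdjoinRoot.mk_eq_zero.1 hz
    have hassoc := hqi.associated_of_dvd (Polynomial.irreducible_X) hdvd
    have hX : (X : Polynomial (ZMod 2)) ∣ Dp := hassoc.symm.dvd.trans hqd
    have hz0 : Dp.eval 0 = 0 := by
      obtain ⟨c, hc⟩ := hX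
      rw [hc]; simp
    rw [Dp_eval_zero] at hz0
    exact one_ne_zero hz0
  have hprime : Nat.Prime 8191 := by norm_num
  have hord_dvd : orderOf (AdjoinRoot.root q) ∣ 8191 := orderOf_dvd_of_pow_eq_one hα_pow
  have hord : orderOf (AdjoinRoot.root q) = 8191 := by
    rcases (Nat.Prime.eq_one_or_self_of_dvd hprime _ hord_dvd) with h | h
    · exact absurd (orderOf_eq_one_iff.1 h) hα_ne_one
    · exact h
  have hcard : Fintype.card (AdjoinRoot q) = 2 ^ q.natDegree := by
    have h1 : Fintype.card (AdjoinRoot q) =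
        Fintype.card (ZMod 2) ^ Module.finrank (ZMod 2) (AdjoinRoot q) :=
      Module.card_eq_pow_finrank
    rw [ZMod.card] at h1
    rw [h1, (AdjoinRoot.powerBasis hq0).finrank, AdjoinRoot.powerBasis_dim]
  have hdvd_card : (8191 : ℕ) ∣ 2 ^ q.natDegree - 1 := by
    classical
    have hu : orderOf (Units.mk0 (AdjoinRoot.root q) hα_ne_zero) ∣
        Fintype.card (AdjoinRoot q)ˣ := orderOf_dvd_card
    rw [Fintype.card_units, hcard] at hu
    have hv : orderOf ((Units.mk0 (AdjoinRoot.root q) hα_ne_zero : (AdjoinRoot q)ˣ) :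
        AdjoinRoot q) = orderOf (Units.mk0 (AdjoinRoot.root q) hα_ne_zero) := orderOf_units
    rw [Units.val_mk0, hord] at hv
    rw [hv]
    exact hu
  have hdle : q.natDegree ≤ 13 := by
    have := Polynomial.natDegree_le_of_dvd hqd Dp_ne_zero
    rwa [Dp_natDegree] at this
  have hdpos : 0 < q.natDegree := hqi.natDegree_pos
  have hdeg13 : q.natDegree = 13 := by
    interval_cases h : q.natDegree <;> revert hdvd_card <;> decide
  obtain ⟨c, hc⟩ := hqd
  have hc0 : c ≠ 0 := by rintro rfl; rw [mul_zero] at hc; exact Dp_ne_zero hc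
  have hcdeg : c.natDegree = 0 := by
    have := Polynomial.natDegree_mul hq0 hc0
    rw [← hc, Dp_natDegree, hdeg13] at this
    omega
  have hcC : c = C (c.coeff 0) := Polynomial.eq_C_of_natDegree_eq_zero hcdeg
  have hlead : c.coeff 0 = 1 := by
    have hm := Dp_monic
    rw [Polynomial.Monic, hc, Polynomial.leadingCoeff_mul, hqm.leadingCoeff, one_mul,
      hcC, Polynomial.leadingCoeff_C] at hm
    exact hm
  have hDq : Dp = q := by rw [hc, hcC, hlead, map_one, mul_one]
  rw [hDq]
  exact hqi

lemma dvd_X_pow_gcd (P : Polynomial (ZMod 2)) :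
    ∀ a b : ℕ, P ∣ X ^ a - 1 → P ∣ X ^ b - 1 → P ∣ X ^ Nat.gcd a b - 1 := by
  intro a
  induction a using Nat.strong_induction_on with
  | _ a ih =>
    intro b ha hb
    rcases Nat.eq_zero_or_pos a with rfl | hpos
    · simpa [Nat.gcd_zero_left] using hb
    · rw [Nat.gcd_rec]
      have hmod : P ∣ X ^ (b % a) - 1 := by
        have h1 : (X ^ a - 1 : Polynomial (ZMod 2)) ∣ X ^ (a * (b / a)) - 1 := by
          have := sub_dvd_pow_sub_pow (X ^ a : Polynomial (ZMod 2)) 1 (b / a)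
          simpa [← pow_mul] using this
        have hba : a * (b / a) + b % a = b := Nat.div_add_mod b a
        have h2 : (X ^ (b % a) - 1 : Polynomial (ZMod 2)) =
            (X ^ b - 1) - X ^ (b % a) * (X ^ (a * (b / a)) - 1) := by
          rw [mul_sub, mul_one, ← pow_add, add_comm (b % a), hba]; ring
        rw [h2]
        exact dvd_sub hb ((ha.trans h1).mul_left _)
      exact ih (b % a) (Nat.mod_lt b hpos) a hmod ha

lemma Dp_hasPeriod : HasPeriod Dp 8191 := by
  refine ⟨by norm_num, Dp_dvd, ?_⟩
  intro m hm hdvd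
  by_contra hlt
  push_neg at hlt
  have hprime : Nat.Prime 8191 := by norm_num
  have hco : Nat.gcd 8191 m = 1 := by
    have hnd : ¬ (8191 ∣ m) := Nat.not_dvd_of_pos_of_lt hm hlt
    exact (Nat.Prime.coprime_iff_not_dvd hprime).2 hnd
  have hdd := dvd_X_pow_gcd Dp 8191 m Dp_dvd hdvd
  rw [hco, pow_one] at hdd
  have hdeg1 : (X - 1 : Polynomial (ZMod 2)).natDegree = 1 := by
    have := Polynomial.natDegree_X_sub_C (1 : ZMod 2)
    rwa [map_one] at this
  have hX1 : (X - 1 : Polynomial (ZMod 2)) ≠ 0 := by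
    intro h
    rw [h] at hdeg1
    simp at hdeg1
  have hle := Polynomial.natDegree_le_of_dvd hdd hX1
  rw [Dp_natDegree, hdeg1] at hle
  omega

end AP

/-- Over GF(2), `X^16 + X^3 + 1 = (X^3 + X^2 + 1) · D` where
`D = X^13 + X^12 + X^11 + X^9 + X^6 + X^5 + X^4 + X^2 + 1` is a primitive
polynomial of degree 13; hence `X^16 + X^3 + 1` is almost primitive with
exponent 13 and increment 3 (it has a primitive factor of degree 13 > 16/2). -/
theorem trinomial_16_3_almost_primitive :
    (X ^ 16 + X ^ 3 + 1 : Polynomial (ZMod 2)) =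
      (X ^ 3 + X ^ 2 + 1) *
        (X ^ 13 + X ^ 12 + X ^ 11 + X ^ 9 + X ^ 6 + X ^ 5 + X ^ 4 + X ^ 2 + 1) ∧
    (X ^ 13 + X ^ 12 + X ^ 11 + X ^ 9 + X ^ 6 + X ^ 5 + X ^ 4 + X ^ 2 + 1 :
      Polynomial (ZMod 2)).natDegree = 13 ∧
    IsPrimitivePoly
      (X ^ 13 + X ^ 12 + X ^ 11 + X ^ 9 + X ^ 6 + X ^ 5 + X ^ 4 + X ^ 2 + 1) ∧
    ∃ D : Polynomial (ZMod 2), IsPrimitivePoly D ∧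
      D ∣ (X ^ 16 + X ^ 3 + 1 : Polynomial (ZMod 2)) ∧
      D.natDegree = 13 ∧ 16 < 2 * 13 := by
  have hfac := AP.factorization
  have hdeg := AP.Dp_natDegree
  have hprim : IsPrimitivePoly AP.Dp := by
    refine ⟨by rw [hdeg]; norm_num, AP.Dp_irreducible, ?_⟩
    rw [hdeg]
    norm_num
    exact AP.Dp_hasPeriod
  rw [show (X ^ 13 + X ^ 12 + X ^ 11 + X ^ 9 + X ^ 6 + X ^ 5 + X ^ 4 + X ^ 2 + 1 :
      Polynomial (ZMod 2)) = AP.Dp from rfl]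
  exact ⟨hfac, hdeg, hprim, AP.Dp, hprim, Dvd.intro_left _ hfac.symm, hdeg, by norm_num⟩
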